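/- Let Z > 0. For σ > 0 define C₋(σ) = −(√Z/(2πσ))·(2iσ)^{−iZ/(2σ)}·Γ(iZ/(2σ)) ∈ ℂ. Then for every σ > 0: |C₋(σ)|² = 1/( πσ·(1 − e^{−πZ/σ}) ). In particular √(πσ)·|C₋(σ)| → 1 as σ → 0⁺. -/

import Mathlib

/-- The connection coefficient
`C₋(σ) = −(√Z/(2πσ))·(2iσ)^{−iZ/(2σ)}·Γ(iZ/(2σ))`, with the principal branch of the
complex power. -/
noncomputable def Cminus (Z σ : ℝ) : ℂ :=
  -((Real.sqrt Z / (2 * Real.pi * σ) : ℝ) : ℂ)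
    * (2 * Complex.I * (σ : ℂ)) ^ (-(Complex.I * (Z : ℂ)) / (2 * (σ : ℂ)))
    * Complex.Gamma (Complex.I * (Z : ℂ) / (2 * (σ : ℂ)))

open Complex Real Filter

lemma gamma_I_norm_sq (y : ℝ) (hy : 0 < y) :
    ‖Complex.Gamma ((y : ℂ) * Complex.I)‖ ^ 2 = Real.pi / (y * Real.sinh (Real.pi * y)) := by
  set z : ℂ := (y : ℂ) * Complex.I with hz
  have hz0 : z ≠ 0 := by
    simp [hz, Complex.ext_iff, hy.ne']
  have hconj : (starRingEnd ℂ) z = -z := by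
    simp [hz, Complex.ext_iff]
  have hG1 : Complex.Gamma (1 - z) = (-z) * Complex.Gamma (-z) := by
    have := Complex.Gamma_add_one (-z) (neg_ne_zero.2 hz0)
    rw [← this]; ring_nf
  have hsin : Complex.sin (↑Real.pi * z) = (Real.sinh (Real.pi * y) : ℂ) * Complex.I := by
    have : (↑Real.pi : ℂ) * z = ((Real.pi * y : ℝ) : ℂ) * Complex.I := by
      push_cast [hz]; ring
    rw [this, Complex.sin_mul_I, Complex.ofReal_sinh]
  have hsinh : Real.sinh (Real.pi * y) ≠ 0 := by
    have : 0 < Real.sinh (Real.pi * y) := Real.sinh_pos_iff.2 (by positivity)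
    exact this.ne'
  have key : Complex.Gamma z * (starRingEnd ℂ) (Complex.Gamma z)
      = ((Real.pi / (y * Real.sinh (Real.pi * y)) : ℝ) : ℂ) := by
    rw [← Complex.Gamma_conj, hconj]
    have h2 : Complex.Gamma z * Complex.Gamma (-z)
        = (Complex.Gamma z * Complex.Gamma (1 - z)) / (-z) := by
      rw [hG1]
      field_simp
    rw [h2, Complex.Gamma_mul_Gamma_one_sub, hsin, hz]
    have hI : Complex.I ≠ 0 := Complex.I_ne_zero
    have hyC : (y : ℂ) ≠ 0 := by exact_mod_cast hy.ne'
    have hsC : ((Real.sinh (Real.pi * y) : ℂ)) ≠ 0 := by exact_mod_cast hsinh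
    push_cast
    field_simp
    rw [Complex.I_sq]; ring
  have h5 : ((Complex.normSq (Complex.Gamma z) : ℝ) : ℂ)
      = ((Real.pi / (y * Real.sinh (Real.pi * y)) : ℝ) : ℂ) := by
    rw [← Complex.mul_conj]; exact key
  have h6 : Complex.normSq (Complex.Gamma z) = Real.pi / (y * Real.sinh (Real.pi * y)) :=
    by exact_mod_cast h5
  rw [← h6, Complex.sq_norm]

lemma norm_Cminus_sq (Z σ : ℝ) (hZ : 0 < Z) (hσ : 0 < σ) :
    ‖Cminus Z σ‖ ^ 2 = 1 / (Real.pi * σ * (1 - Real.exp (-(Real.pi * Z / σ)))) := by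
  have hπ := Real.pi_pos
  set y : ℝ := Z / (2 * σ) with hy
  have hy0 : 0 < y := by positivity
  have hσC : (σ : ℂ) ≠ 0 := by exact_mod_cast hσ.ne'
  have harg1 : Complex.I * (Z : ℂ) / (2 * (σ : ℂ)) = (y : ℂ) * Complex.I := by
    push_cast [hy]; field_simp
  have harg2 : -(Complex.I * (Z : ℂ)) / (2 * (σ : ℂ)) = ((-y : ℝ) : ℂ) * Complex.I := by
    push_cast [hy]; field_simp
  have hbase : (2 * Complex.I * (σ : ℂ)) ≠ 0 := by
    simp [Complex.I_ne_zero, hσC]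
  have hargb : Complex.arg (2 * Complex.I * (σ : ℂ)) = Real.pi / 2 := by
    have : 2 * Complex.I * (σ : ℂ) = ((2 * σ : ℝ) : ℂ) * Complex.I := by push_cast; ring
    rw [this, Complex.arg_real_mul _ (by positivity), Complex.arg_I]
  have habs : ‖(2 * Complex.I * (σ : ℂ))‖ = 2 * σ := by
    simp [abs_of_pos hσ]
  have hcpow : ‖(2 * Complex.I * (σ : ℂ)) ^ (((-y : ℝ) : ℂ) * Complex.I)‖
      = Real.exp (Real.pi / 2 * y) := by
    rw [norm_cpow_of_ne_zero hbase, hargb, habs]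
    simp [Complex.mul_re, Complex.mul_im, Real.exp_neg]
  unfold Cminus
  rw [harg1, harg2]
  rw [norm_mul, norm_mul, hcpow, mul_pow, mul_pow, gamma_I_norm_sq y hy0]
  have hnorm1 : ‖-((Real.sqrt Z / (2 * Real.pi * σ) : ℝ) : ℂ)‖ = Real.sqrt Z / (2 * Real.pi * σ) := by
    rw [norm_neg, Complex.norm_real, Real.norm_eq_abs, abs_of_pos (by positivity)]
  rw [hnorm1]
  have hsq : Real.sqrt Z ^ 2 = Z := Real.sq_sqrt hZ.le
  have hexp : Real.exp (Real.pi / 2 * y) ^ 2 = Real.exp (Real.pi * y) := by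
    rw [← Real.exp_nat_mul]; ring_nf
  rw [div_pow, hsq, hexp]
  have hZy : Real.pi * Z / σ = 2 * (Real.pi * y) := by
    rw [hy]; field_simp
  rw [hZy]
  set t : ℝ := Real.pi * y with ht
  have ht0 : 0 < t := by positivity
  rw [Real.sinh_eq]
  have hE : 0 < Real.exp t := Real.exp_pos t
  have hE2 : Real.exp (-(2 * t)) = (Real.exp t)⁻¹ ^ 2 := by
    rw [← Real.exp_neg]; rw [← Real.exp_nat_mul]; ring_nf
  have hEn : Real.exp (-t) = (Real.exp t)⁻¹ := Real.exp_neg t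
  have hne : 1 - Real.exp (-(2 * t)) ≠ 0 := by
    have : Real.exp (-(2 * t)) < 1 := Real.exp_lt_one_iff.2 (by linarith)
    linarith
  rw [hE2] at hne ⊢
  rw [hEn, hy]
  have hEne : Real.exp t ≠ 0 := hE.ne'
  have hone : 1 < Real.exp t := Real.one_lt_exp_iff.2 ht0
  have hinv1 : (Real.exp t)⁻¹ < 1 := inv_lt_one_of_one_lt₀ hone
  have hsub_ne : Real.exp t - (Real.exp t)⁻¹ ≠ 0 := by
    have : (Real.exp t)⁻¹ < Real.exp t := lt_trans hinv1 hone
    linarith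
  generalize hg : Real.exp t = E at hne hEne hsub_ne ⊢
  have hπσ : Real.pi * σ ≠ 0 := by positivity
  have h6 : E ^ 2 - 1 ≠ 0 := by
    intro h
    apply hne
    have hE2one : E ^ 2 = 1 := by linarith
    rw [inv_pow, hE2one]
    norm_num
  have r1 : E - E⁻¹ = (E ^ 2 - 1) / E := by field_simp
  have r2 : 1 - E⁻¹ ^ 2 = (E ^ 2 - 1) / E ^ 2 := by field_simp
  rw [r1, r2]
  field_simp

/-- `|C₋(σ)|² = 1/(πσ(1 − e^{−πZ/σ}))` for all `σ > 0`; in particular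
`√(πσ)·|C₋(σ)| → 1` as `σ → 0⁺`. -/
theorem stmt14 (Z : ℝ) (hZ : 0 < Z) :
    (∀ σ : ℝ, 0 < σ →
      ‖Cminus Z σ‖ ^ 2 = 1 / (Real.pi * σ * (1 - Real.exp (-(Real.pi * Z / σ))))) ∧
    Filter.Tendsto (fun σ : ℝ => Real.sqrt (Real.pi * σ) * ‖Cminus Z σ‖)
      (nhdsWithin 0 (Set.Ioi 0)) (nhds 1) := by
  have hπ := Real.pi_pos
  have hmain := fun σ hσ => norm_Cminus_sq Z σ hZ hσ
  refine ⟨hmain, ?_⟩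
  have heq : ∀ σ ∈ Set.Ioi (0 : ℝ),
      Real.sqrt (1 / (1 - Real.exp (-(Real.pi * Z / σ))))
        = Real.sqrt (Real.pi * σ) * ‖Cminus Z σ‖ := by
    intro σ hσ
    have hσ' : (0:ℝ) < σ := hσ
    rw [← Real.sqrt_sq (norm_nonneg (Cminus Z σ)), ← Real.sqrt_mul (by positivity)]
    congr 1
    rw [hmain σ hσ']
    have hne : Real.pi * σ ≠ 0 := by positivity
    have hne2 : 1 - Real.exp (-(Real.pi * Z / σ)) ≠ 0 := by
      have hlt : Real.exp (-(Real.pi * Z / σ)) < 1 := by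
        apply Real.exp_lt_one_iff.2
        have : 0 < Real.pi * Z / σ := by positivity
        linarith
      linarith
    rw [eq_comm, mul_one_div, div_eq_div_iff (mul_ne_zero hne hne2) hne2]
    ring
  have hlim : Filter.Tendsto (fun σ : ℝ => Real.sqrt (1 / (1 - Real.exp (-(Real.pi * Z / σ)))))
      (nhdsWithin 0 (Set.Ioi 0)) (nhds 1) := by
    have h1 : Filter.Tendsto (fun σ : ℝ => Real.exp (-(Real.pi * Z / σ)))
        (nhdsWithin 0 (Set.Ioi 0)) (nhds 0) := by
      apply Real.tendsto_exp_atBot.comp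
      have h2 : Filter.Tendsto (fun σ : ℝ => Real.pi * Z / σ)
          (nhdsWithin 0 (Set.Ioi 0)) Filter.atTop := by
        have h3 := (tendsto_inv_nhdsGT_zero (𝕜 := ℝ)).const_mul_atTop
          (by positivity : (0:ℝ) < Real.pi * Z)
        exact h3.congr fun x => by rw [div_eq_mul_inv]
      exact Filter.tendsto_neg_atBot_iff.2 h2
    have h4 : Filter.Tendsto (fun σ : ℝ => 1 / (1 - Real.exp (-(Real.pi * Z / σ))))
        (nhdsWithin 0 (Set.Ioi 0)) (nhds 1) := by
      have h5 : Filter.Tendsto (fun σ : ℝ => 1 - Real.exp (-(Real.pi * Z / σ)))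
          (nhdsWithin 0 (Set.Ioi 0)) (nhds 1) := by
        simpa using (tendsto_const_nhds.sub h1)
      have h4' := h5.inv₀ one_ne_zero
      simpa [one_div] using h4'
    have h7 := (Real.continuous_sqrt.continuousAt (x := (1:ℝ))).tendsto.comp h4
    rw [Real.sqrt_one] at h7
    exact h7
  exact Filter.Tendsto.congr' (eventually_nhdsWithin_of_forall heq) hlim
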